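/- Let G be a torsion-free group that contains a subgroup H of finite index with H isomorphic to ℤ. Then G is isomorphic to ℤ. -/

import Mathlib

/-- A predicate on a monoid saying that only `1` is of finite order (old Mathlib `Monoid.IsTorsionFree`). -/
def Monoid.IsTorsionFree (G : Type*) [Monoid G] : Prop :=
  ∀ g : G, g ≠ 1 → ¬IsOfFinOrder g

open Subgroup
open scoped commutatorElement

private lemma aux_zpow_eq_one {G : Type*} [Group G] (hTF : Monoid.IsTorsionFree G)
    {a : G} (ha : a ≠ 1) {t : ℤ} (h : a ^ t = 1) : t = 0 := by
  by_contra ht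
  refine hTF a ha (isOfFinOrder_iff_pow_eq_one.2 ⟨t.natAbs, Int.natAbs_pos.2 ht, ?_⟩)
  rcases Int.natAbs_eq t with h' | h'
  · rw [← zpow_natCast, ← h', h]
  · rw [← zpow_natCast, ← neg_neg (t.natAbs : ℤ), ← h', zpow_neg, h, inv_one]

private lemma aux_zpow_inj {G : Type*} [Group G] (hTF : Monoid.IsTorsionFree G)
    {a : G} (ha : a ≠ 1) {s t : ℤ} (h : a ^ s = a ^ t) : s = t := by
  have h1 : a ^ (s - t) = 1 := by
    rw [zpow_sub, h, mul_inv_cancel]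
  have := aux_zpow_eq_one hTF ha h1
  omega

private lemma aux_subgroup_int (K : Subgroup (Multiplicative ℤ)) (hK : K ≠ ⊥) :
    Nonempty (K ≃* Multiplicative ℤ) := by
  obtain ⟨g, hg⟩ := IsCyclic.exists_generator (α := K)
  obtain ⟨x, hx⟩ := Subgroup.ne_bot_iff_exists_ne_one.mp hK
  have hg1 : g ≠ 1 := by
    rintro rfl
    obtain ⟨t, ht⟩ := Subgroup.mem_zpowers_iff.mp (hg x)
    exact hx (by rw [← ht, one_zpow])
  set a : ℤ := Multiplicative.toAdd (g : Multiplicative ℤ) with ha_def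
  have ha : a ≠ 0 := by
    intro h
    apply hg1
    have : (g : Multiplicative ℤ) = 1 := by
      rw [← ofAdd_toAdd (g : Multiplicative ℤ), ← ha_def, h]; rfl
    exact Subtype.ext this
  let f : Multiplicative ℤ →* K :=
    { toFun := fun t => g ^ t.toAdd
      map_one' := by simp
      map_mul' := fun s t => by
        simp [zpow_add] }
  have hinj : Function.Injective f := by
    intro s t h
    have h2 : ((g ^ s.toAdd : K) : Multiplicative ℤ) = ((g ^ t.toAdd : K) : Multiplicative ℤ) := by
      exact congrArg _ h
    rw [SubgroupClass.coe_zpow, SubgroupClass.coe_zpow] at h2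
    have h3 := congrArg Multiplicative.toAdd h2
    rw [toAdd_zpow, toAdd_zpow, smul_eq_mul, smul_eq_mul] at h3
    have : s.toAdd = t.toAdd := by
      exact mul_right_cancel₀ ha (by rw [mul_comm s.toAdd a, mul_comm t.toAdd a] at h3 ⊢; exact h3)
    exact Multiplicative.toAdd.injective this
  have hsurj : Function.Surjective f := by
    intro x
    obtain ⟨t, ht⟩ := Subgroup.mem_zpowers_iff.mp (hg x)
    exact ⟨Multiplicative.ofAdd t, by simpa [f] using ht⟩
  exact ⟨(MulEquiv.ofBijective f ⟨hinj, hsurj⟩).symm⟩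

private lemma aux_comm_left {G : Type*} [Group G] (x y z : G) (hz : z ∈ Subgroup.center G) :
    ⁅x * z, y⁆ = ⁅x, y⁆ := by
  have h := Subgroup.mem_center_iff.mp hz
  rw [commutatorElement_def, commutatorElement_def, mul_assoc x z y, ← h y]
  group

private lemma aux_comm_right {G : Type*} [Group G] (x y w : G) (hw : w ∈ Subgroup.center G) :
    ⁅x, y * w⁆ = ⁅x, y⁆ := by
  have h := Subgroup.mem_center_iff.mp hw
  rw [commutatorElement_def, commutatorElement_def, ← mul_assoc x y w,
    mul_assoc (x * y) w x⁻¹, ← h x⁻¹]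
  group

private lemma aux_finite_commutatorSet (G : Type*) [Group G]
    [h : (Subgroup.center G).FiniteIndex] : Finite (commutatorSet G) := by
  let f : (G ⧸ Subgroup.center G) × (G ⧸ Subgroup.center G) → G := fun p =>
    Quotient.liftOn₂ p.1 p.2 (fun x y => ⁅x, y⁆) (by
      intro a₁ a₂ b₁ b₂ h1 h2
      have hz : a₁⁻¹ * b₁ ∈ Subgroup.center G := (QuotientGroup.leftRel_apply).mp h1
      have hw : a₂⁻¹ * b₂ ∈ Subgroup.center G := (QuotientGroup.leftRel_apply).mp h2
      have e1 : b₁ = a₁ * (a₁⁻¹ * b₁) := by group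
      have e2 : b₂ = a₂ * (a₂⁻¹ * b₂) := by group
      rw [e1, e2, aux_comm_left _ _ _ hz, aux_comm_right _ _ _ hw])
  have hsub : commutatorSet G ⊆ Set.range f := by
    rintro x ⟨g, h', rfl⟩
    exact ⟨(QuotientGroup.mk g, QuotientGroup.mk h'), rfl⟩
  exact ((Set.finite_range f).subset hsub).to_subtype

/-- A torsion-free group with a finite-index subgroup isomorphic to ℤ
is itself isomorphic to ℤ. -/
theorem torsionFree_virtuallyZ_iso_Z (G : Type*) [Group G]
    (hTF : Monoid.IsTorsionFree G)
    (H : Subgroup G) (hfi : H.FiniteIndex)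
    (hiso : Nonempty (H ≃* Multiplicative ℤ)) :
    Nonempty (G ≃* Multiplicative ℤ) := by
  obtain ⟨eh⟩ := hiso
  -- the normal core N of H
  set N : Subgroup G := H.normalCore with hN_def
  haveI hNnormal : N.Normal := Subgroup.normalCore_normal H
  haveI hNfi : N.FiniteIndex := H.finiteIndex_normalCore
  have hNH : N ≤ H := Subgroup.normalCore_le H
  -- G is infinite, hence N ≠ ⊥
  have hGinf : Infinite G := by
    have : Infinite H := Infinite.of_injective eh.symm eh.symm.injective
    exact Infinite.of_injective (fun h : H => (h : G)) Subtype.coe_injective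
  have hNbot : N ≠ ⊥ := by
    intro h
    have : N.index = Nat.card G := by rw [h, Subgroup.index_bot]
    have h2 : Nat.card G ≠ 0 := this ▸ hNfi.index_ne_zero
    rw [Nat.card_ne_zero] at h2
    exact absurd h2.2 (not_finite_iff_infinite.mpr hGinf)
  -- N is isomorphic to Multiplicative ℤ
  obtain ⟨n1, hn1N, hn1ne⟩ : ∃ n : G, n ∈ N ∧ n ≠ 1 := by
    obtain ⟨⟨n, hn⟩, hne⟩ := Subgroup.ne_bot_iff_exists_ne_one.mp hNbot
    exact ⟨n, hn, fun h => hne (Subtype.ext h)⟩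
  have e : N ≃* Multiplicative ℤ := by
    have e1 : N ≃* (N.subgroupOf H) := (Subgroup.subgroupOfEquivOfLe hNH).symm
    have e2 := eh.subgroupMap (N.subgroupOf H)
    set K := (N.subgroupOf H).map (eh : H →* Multiplicative ℤ) with hK_def
    have hK : K ≠ ⊥ := by
      rw [Subgroup.ne_bot_iff_exists_ne_one]
      refine ⟨⟨eh ⟨n1, hNH hn1N⟩, ⟨⟨n1, hNH hn1N⟩, by simpa [Subgroup.mem_subgroupOf] using hn1N, rfl⟩⟩, ?_⟩
      intro h
      have : eh ⟨n1, hNH hn1N⟩ = 1 := congrArg Subtype.val h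
      rw [← map_one eh] at this
      have := eh.injective this
      exact hn1ne (congrArg Subtype.val this)
    exact (e1.trans e2).trans (aux_subgroup_int K hK).some
  -- a generator n₀ of N
  set n₀G : N := e.symm (Multiplicative.ofAdd 1) with hn₀G_def
  set n₀ : G := (n₀G : G) with hn₀_def
  have hn₀mem : n₀ ∈ N := n₀G.2
  have hn₀ne : n₀ ≠ 1 := by
    intro h
    have h0 : n₀G = 1 := Subtype.ext h
    have h2 : Multiplicative.ofAdd (1 : ℤ) = 1 :=
      calc Multiplicative.ofAdd (1 : ℤ) = e n₀G := by
            rw [hn₀G_def, MulEquiv.apply_symm_apply]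
        _ = e 1 := congrArg e h0
        _ = 1 := map_one e
    have h3 : (1 : ℤ) = 0 := by
      simpa using congrArg Multiplicative.toAdd h2
    exact one_ne_zero h3
  have hgen : ∀ n ∈ N, ∃ t : ℤ, n = n₀ ^ t := by
    intro n hn
    refine ⟨(e ⟨n, hn⟩).toAdd, ?_⟩
    have : (⟨n, hn⟩ : N) = n₀G ^ (e ⟨n, hn⟩).toAdd := by
      apply e.injective
      rw [map_zpow, hn₀G_def, MulEquiv.apply_symm_apply]
      rw [← ofAdd_toAdd (e ⟨n, hn⟩), ← ofAdd_zsmul]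
      simp
    rw [hn₀_def, ← SubgroupClass.coe_zpow, ← this]
  have hzinj : ∀ s t : ℤ, n₀ ^ s = n₀ ^ t → s = t := fun s t h =>
    aux_zpow_inj hTF hn₀ne h
  have hkne : N.index ≠ 0 := hNfi.index_ne_zero
  have hpow1 : ∀ g : G, g ^ N.index = 1 → g = 1 := by
    intro g hg
    by_contra h
    exact hTF g h (isOfFinOrder_iff_pow_eq_one.2 ⟨N.index, Nat.pos_of_ne_zero hkne, hg⟩)
  -- every conjugate of n₀ is n₀ : N is central
  have key : ∀ g : G, g * n₀ * g⁻¹ = n₀ := by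
    intro g
    obtain ⟨j, hj⟩ := hgen _ (hNnormal.conj_mem n₀ hn₀mem g)
    obtain ⟨i, hi⟩ := hgen _ (hNnormal.conj_mem n₀ hn₀mem g⁻¹)
    rw [inv_inv] at hi
    have hij : n₀ ^ (1 : ℤ) = n₀ ^ (j * i) := by
      have hthis : n₀ = g⁻¹ * (g * n₀ * g⁻¹) * g := by group
      rw [hj] at hthis
      have hc : (g⁻¹ * n₀ * g⁻¹⁻¹) ^ j = g⁻¹ * n₀ ^ j * g⁻¹⁻¹ := conj_zpow
      rw [inv_inv] at hc
      calc n₀ ^ (1 : ℤ) = n₀ := zpow_one n₀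
        _ = g⁻¹ * n₀ ^ j * g := hthis
        _ = (g⁻¹ * n₀ * g) ^ j := hc.symm
        _ = (n₀ ^ i) ^ j := by rw [← hi]
        _ = n₀ ^ (j * i) := by rw [← zpow_mul, mul_comm i j]
    have hji : j * i = 1 := (hzinj _ _ hij).symm
    rcases Int.mul_eq_one_iff_eq_one_or_neg_one.mp hji with ⟨hj1, _⟩ | ⟨hj1, _⟩
    · rw [hj1, zpow_one] at hj; exact hj
    · exfalso
      rw [hj1] at hj
      obtain ⟨t, ht⟩ := hgen (g ^ N.index) (N.pow_index_mem g)
      have h1 : g * g ^ N.index * g⁻¹ = g ^ N.index := by group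
      rw [ht, ← conj_zpow, hj] at h1
      have h2 : n₀ ^ (-t) = n₀ ^ t := by
        rw [← h1, ← zpow_mul]
        norm_num
      have ht0 : t = 0 := by have := hzinj _ _ h2; omega
      rw [ht0, zpow_zero] at ht
      have hg1 : g = 1 := hpow1 g ht
      rw [hg1] at hj
      simp only [one_mul, inv_one, mul_one] at hj
      have : n₀ ^ (1 : ℤ) = n₀ ^ (-1 : ℤ) := by
        rw [zpow_one]; exact hj
      have := hzinj _ _ this
      omega
  have hNcenter : N ≤ Subgroup.center G := by
    intro n hn
    obtain ⟨t, ht⟩ := hgen n hn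
    rw [Subgroup.mem_center_iff]
    intro g
    have h1 : g * n * g⁻¹ = n := by
      rw [ht, ← conj_zpow, key g]
    calc g * n = (g * n * g⁻¹) * g := by group
      _ = n * g := by rw [h1]
  -- Schur: G is abelian
  haveI : (Subgroup.center G).FiniteIndex := Subgroup.finiteIndex_of_le hNcenter
  haveI : Finite (commutatorSet G) := aux_finite_commutatorSet G
  haveI : Finite (_root_.commutator G) := inferInstance
  have hcomm : ∀ a b : G, Commute a b := by
    intro a b
    have h1 : ⁅a, b⁆ ∈ _root_.commutator G :=
      (_root_.commutator_def G) ▸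
        Subgroup.commutator_mem_commutator (Subgroup.mem_top a) (Subgroup.mem_top b)
    have h2 : IsOfFinOrder (⟨⁅a, b⁆, h1⟩ : _root_.commutator G) :=
      isTorsion_of_finite _
    obtain ⟨n, hn0, hxn⟩ := isOfFinOrder_iff_pow_eq_one.mp h2
    have h3 : IsOfFinOrder (⁅a, b⁆ : G) := by
      refine isOfFinOrder_iff_pow_eq_one.2 ⟨n, hn0, ?_⟩
      have := congrArg Subtype.val hxn
      simpa using this
    rw [← commutatorElement_eq_one_iff_commute]
    by_contra h
    exact hTF _ h h3
  -- the k-th power map embeds G into N ≅ ℤ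
  set k := N.index with hk_def
  let ψ : G →* N :=
    { toFun := fun g => ⟨g ^ k, N.pow_index_mem g⟩
      map_one' := by ext; simp
      map_mul' := fun a b => by ext; exact (hcomm a b).mul_pow k }
  let θ : G →* Multiplicative ℤ := (e : N →* Multiplicative ℤ).comp ψ
  have hψinj : Function.Injective ψ := by
    intro a b h
    have h1 : a ^ k = b ^ k := congrArg Subtype.val h
    have h2 : (a * b⁻¹) ^ k = 1 := by
      rw [(hcomm a b⁻¹).mul_pow, inv_pow, h1, mul_inv_cancel]
    have := hpow1 _ h2
    rw [mul_inv_eq_one] at this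
    exact this
  have hθinj : Function.Injective θ := fun a b h => hψinj (e.injective h)
  have hθrange : θ.range ≠ ⊥ := by
    rw [Subgroup.ne_bot_iff_exists_ne_one]
    refine ⟨⟨θ n₀, ⟨n₀, rfl⟩⟩, ?_⟩
    intro h
    have h1 : θ n₀ = 1 := congrArg Subtype.val h
    have h2 : θ 1 = 1 := map_one θ
    have := hθinj (h1.trans h2.symm)
    exact hn₀ne this
  obtain ⟨e2⟩ := aux_subgroup_int θ.range hθrange
  exact ⟨(MonoidHom.ofInjective hθinj).trans e2⟩
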